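/- Conversely, if two holomorphic functions f and g on a connected domain have nonvanishing derivatives and equal Schwarzian derivatives S(f) = S(g), then g is a fractional linear transformation of f: g = (af+b)/(cf+d) for some a,b,c,d with ad-bc ≠ 0. -/

import Mathlib

open Complex Filter Topology

section ODELoc

lemma analyticAt_deriv' {φ : ℂ → ℂ} {z : ℂ} (h : AnalyticAt ℂ φ z) :
    AnalyticAt ℂ (deriv φ) z := by
  obtain ⟨s, hs, hφ⟩ := h.exists_mem_nhds_analyticOnNhd
  exact hφ.deriv z (mem_of_mem_nhds hs)

lemma ode_loc {u w : ℂ → ℂ} {z₀ : ℂ} (hu : AnalyticAt ℂ u z₀) (hw : ContinuousAt w z₀)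
    (hode : ∀ᶠ z in 𝓝 z₀, deriv u z = w z * u z) (h0 : u z₀ = 0) :
    ∀ᶠ z in 𝓝 z₀, u z = 0 := by
  rcases hu.eventually_eq_zero_or_eventually_ne_zero with h | h
  · exact h
  · exfalso
    have hord : analyticOrderAt u z₀ ≠ ⊤ := by
      intro htop
      have := (analyticOrderAt_eq_top.mp htop).filter_mono (nhdsWithin_le_nhds (s := {z₀}ᶜ))
      exact ((h.and this).exists.elim fun z hz => hz.1 hz.2)
    lift analyticOrderAt u z₀ to ℕ using hord with n hn
    obtain ⟨φ, hφa, hφ0, hev⟩ := (hu.analyticOrderAt_eq_natCast (n := n)).mp hn.symm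
    simp only [smul_eq_mul] at hev
    have hn0 : n ≠ 0 := by
      intro h0'
      subst h0'
      have := hev.self_of_nhds
      simp [h0] at this
      exact hφ0 this.symm
    obtain ⟨m, rfl⟩ := Nat.exists_eq_succ_of_ne_zero hn0
    simp only [Nat.succ_eq_add_one] at hev
    have hder : ∀ᶠ z in 𝓝 z₀, deriv u z =
        ((m : ℂ) + 1) * (z - z₀) ^ m * φ z + (z - z₀) ^ (m + 1) * deriv φ z := by
      filter_upwards [hev.eventually_nhds, hφa.eventually_analyticAt] with z hz hφz
      have h1 : u =ᶠ[𝓝 z] fun y => (y - z₀) ^ (m + 1) * φ y := hz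
      rw [h1.deriv_eq]
      have h2 : HasDerivAt (fun y => (y - z₀) ^ (m + 1) * φ y)
          (((m : ℂ) + 1) * (z - z₀) ^ m * 1 * φ z + (z - z₀) ^ (m + 1) * deriv φ z) z := by
        have hp : HasDerivAt (fun y : ℂ => (y - z₀) ^ (m + 1))
            (((m : ℕ) + 1 : ℕ) * (z - z₀) ^ ((m + 1) - 1) * 1) z :=
          (((hasDerivAt_id z).sub_const z₀).pow (m + 1))
        simpa [Nat.succ_sub_one] using hp.fun_mul hφz.differentiableAt.hasDerivAt
      rw [h2.deriv]
      ring
    set T : ℂ → ℂ := fun z => ((m : ℂ) + 1) * φ z + (z - z₀) * deriv φ z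
        - w z * ((z - z₀) * φ z) with hT
    have hTev : ∀ᶠ z in 𝓝[≠] z₀, T z = 0 := by
      have := ((hder.and hode).and hev).filter_mono (nhdsWithin_le_nhds (s := {z₀}ᶜ))
      filter_upwards [this, self_mem_nhdsWithin] with z hz hz0
      have hz0' : (z - z₀) ≠ 0 := sub_ne_zero.mpr hz0
      have hc : (z - z₀) ^ m * T z = 0 := by
        have := (hz.1.1.symm.trans hz.1.2).trans (by rw [hz.2])
        rw [hT]
        ring_nf
        ring_nf at this
        linear_combination this
      rcases mul_eq_zero.mp hc with h' | h'
      · exact absurd h' (pow_ne_zero m hz0')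
      · exact h'
    have hTc : ContinuousAt T z₀ := by
      have h1 := hφa.continuousAt
      have h2 := (analyticAt_deriv' hφa).continuousAt
      fun_prop
    have ht1 : Tendsto T (𝓝[≠] z₀) (𝓝 (T z₀)) := hTc.continuousWithinAt.tendsto
    have ht2 : Tendsto T (𝓝[≠] z₀) (𝓝 0) :=
      tendsto_const_nhds.congr' (hTev.mono fun z hz => hz.symm)
    have : T z₀ = 0 := tendsto_nhds_unique ht1 ht2
    rw [hT] at this
    simp at this
    have hm1 : ((m : ℂ) + 1) ≠ 0 := by exact_mod_cast Nat.succ_ne_zero m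
    rcases this with h' | h'
    · exact hm1 h'
    · exact hφ0 h'

end ODELoc

/-- The Schwarzian derivative `S(f) = (f''/f')' - (1/2)(f''/f')²`. -/
noncomputable def schwarzian (f : ℂ → ℂ) (z : ℂ) : ℂ :=
  deriv (fun w => deriv (deriv f) w / deriv f w) z
    - (1 / 2) * (deriv (deriv f) z / deriv f z) ^ 2

/-- Two holomorphic functions with nonvanishing derivatives on a connected domain
that have equal Schwarzian derivatives differ by a fractional linear transformation. -/
theorem eq_schwarzian_implies_fractional_linear
    (U : Set ℂ) (hU : IsOpen U) (hUconn : IsConnected U)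
    (f g : ℂ → ℂ) (hf : DifferentiableOn ℂ f U) (hg : DifferentiableOn ℂ g U)
    (hf' : ∀ z ∈ U, deriv f z ≠ 0) (hg' : ∀ z ∈ U, deriv g z ≠ 0)
    (hS : ∀ z ∈ U, schwarzian f z = schwarzian g z) :
    ∃ a b c d : ℂ, a * d - b * c ≠ 0 ∧
      ∀ z ∈ U, c * f z + d ≠ 0 ∧ g z = (a * f z + b) / (c * f z + d) := by
  simp only [schwarzian] at hS
  obtain ⟨z₀, hz₀⟩ := hUconn.nonempty
  have hfa : AnalyticOnNhd ℂ f U := hf.analyticOnNhd hU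
  have hga : AnalyticOnNhd ℂ g U := hg.analyticOnNhd hU
  have hfa1 : AnalyticOnNhd ℂ (deriv f) U := hfa.deriv_of_isOpen hU
  have hga1 : AnalyticOnNhd ℂ (deriv g) U := hga.deriv_of_isOpen hU
  have hfa2 : AnalyticOnNhd ℂ (deriv (deriv f)) U := hfa1.deriv_of_isOpen hU
  have hga2 : AnalyticOnNhd ℂ (deriv (deriv g)) U := hga1.deriv_of_isOpen hU
  set p : ℂ → ℂ := fun w => deriv (deriv f) w / deriv f w with hpdef
  set q : ℂ → ℂ := fun w => deriv (deriv g) w / deriv g w with hqdef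
  have hpa : AnalyticOnNhd ℂ p U := by
    intro z hz; rw [hpdef]; exact (hfa2 z hz).div (hfa1 z hz) (hf' z hz)
  have hqa : AnalyticOnNhd ℂ q U := by
    intro z hz; rw [hqdef]; exact (hga2 z hz).div (hga1 z hz) (hg' z hz)
  have hSpq : ∀ z ∈ U, deriv p z - (1/2) * (p z)^2 = deriv q z - (1/2) * (q z)^2 := by
    intro z hz
    have h := hS z hz
    simp only [hpdef, hqdef] at h ⊢
    exact h
  -- constants
  set c : ℂ := (p z₀ - q z₀) / (2 * deriv f z₀) with htdef
  set d : ℂ := 1 - c * f z₀ with hddef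
  set a : ℂ := deriv g z₀ / deriv f z₀ + c * g z₀ with hadef
  set b : ℂ := g z₀ - a * f z₀ with hbdef
  have hdet : a * d - b * c = deriv g z₀ / deriv f z₀ := by
    rw [hddef, hbdef, hadef]; ring
  have hdet0 : a * d - b * c ≠ 0 := by
    rw [hdet]
    exact div_ne_zero (hg' z₀ hz₀) (hf' z₀ hz₀)
  set D : ℂ → ℂ := fun z => c * f z + d with hDdef
  have hDa : AnalyticOnNhd ℂ D U := by
    intro z hz; rw [hDdef]
    exact (analyticAt_const.mul (hfa z hz)).add analyticAt_const
  have hD1 : D z₀ = 1 := by simp only [hDdef, hddef]; ring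
  -- the open set V where D ≠ 0
  set V : Set ℂ := U ∩ D ⁻¹' {0}ᶜ with hVdef
  have hVo : IsOpen V := by
    apply ContinuousOn.isOpen_inter_preimage _ hU isOpen_compl_singleton
    exact fun z hz => (hDa z hz).continuousAt.continuousWithinAt
  have hz₀V : z₀ ∈ V := ⟨hz₀, by simp [hD1]⟩
  have hVU : V ⊆ U := Set.inter_subset_left
  have hDne : ∀ z ∈ V, D z ≠ 0 := fun z hz => hz.2
  have hVev : ∀ᶠ z in 𝓝 z₀, z ∈ V := hVo.mem_nhds hz₀V
  -- derivative of D
  have hDd : ∀ z ∈ U, HasDerivAt D (c * deriv f z) z := by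
    intro z hz
    rw [hDdef]
    exact (((hfa z hz).differentiableAt.hasDerivAt).const_mul c).add_const d
  -- φ and its derivative
  set φ : ℂ → ℂ := fun z => 2 * c * deriv f z / D z with hφdef
  have hφd : ∀ z ∈ V, HasDerivAt φ
      ((2 * c * deriv (deriv f) z * D z - 2 * c * deriv f z * (c * deriv f z)) / (D z)^2) z := by
    intro z hz
    rw [hφdef]
    exact (((hfa1 z (hVU hz)).differentiableAt.hasDerivAt).const_mul
      (2 * c)).div (hDd z (hVU hz)) (hDne z hz)
  have hφid : ∀ z ∈ V, deriv φ z = p z * φ z - (1/2) * (φ z)^2 := by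
    intro z hz
    have h1 := hDne z hz
    have h2 := hf' z (hVU hz)
    rw [(hφd z hz).deriv]
    simp only [hφdef, hpdef]
    field_simp
  -- r and u
  set r : ℂ → ℂ := fun z => p z - φ z with hrdef
  set u : ℂ → ℂ := fun z => r z - q z with hudef
  have hu0 : u z₀ = 0 := by
    have h2 := hf' z₀ hz₀
    simp only [hudef, hrdef, hφdef, htdef, hD1]
    field_simp
    ring
  have hφa : ∀ z ∈ V, AnalyticAt ℂ φ z := by
    intro z hz; rw [hφdef]
    exact (analyticAt_const.mul (hfa1 z (hVU hz))).div (hDa z (hVU hz)) (hDne z hz)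
  have hra : ∀ z ∈ V, AnalyticAt ℂ r z := by
    intro z hz; rw [hrdef]; exact (hpa z (hVU hz)).sub (hφa z hz)
  have hua : ∀ z ∈ V, AnalyticAt ℂ u z := by
    intro z hz; rw [hudef]; exact (hra z hz).sub (hqa z (hVU hz))
  -- ODE for u
  have huode : ∀ z ∈ V, deriv u z = ((1/2) * (r z + q z)) * u z := by
    intro z hz
    have hdu : deriv u z = deriv r z - deriv q z := by
      rw [hudef]
      exact deriv_sub (hra z hz).differentiableAt (hqa z (hVU hz)).differentiableAt
    have hdr : deriv r z = deriv p z - deriv φ z := by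
      rw [hrdef]
      exact deriv_sub (hpa z (hVU hz)).differentiableAt (hφd z hz).differentiableAt
    rw [hdu, hdr, hφid z hz]
    simp only [hudef, hrdef]
    linear_combination hSpq z (hVU hz)
  have hwc : ContinuousAt (fun z => (1/2 : ℂ) * (r z + q z)) z₀ :=
    continuousAt_const.mul (((hra z₀ hz₀V).continuousAt).add ((hqa z₀ hz₀).continuousAt))
  have hu_ev : ∀ᶠ z in 𝓝 z₀, u z = 0 :=
    ode_loc (hua z₀ hz₀V) hwc (by filter_upwards [hVev] with z hz; exact huode z hz) hu0
  -- the Möbius transform of f and its derivative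
  set hh : ℂ → ℂ := fun z => (a * f z + b) / D z with hhdef
  set hder : ℂ → ℂ := fun z => (a * d - b * c) * deriv f z / (D z)^2 with hderdef
  have hhd : ∀ z ∈ V, HasDerivAt hh (hder z) z := by
    intro z hz
    have h1 : HasDerivAt hh ((a * deriv f z * D z - (a * f z + b) * (c * deriv f z)) / (D z)^2)
        z := by
      rw [hhdef]
      exact ((((hfa z (hVU hz)).differentiableAt.hasDerivAt).const_mul
        a).add_const b).div (hDd z (hVU hz)) (hDne z hz)
    have h2 : (a * deriv f z * D z - (a * f z + b) * (c * deriv f z)) / (D z)^2 = hder z := by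
      have hD := hDne z hz
      simp only [hderdef, hDdef] at *
      field_simp
      ring
    rw [← h2]
    exact h1
  have hhd_eq : Set.EqOn (deriv hh) hder V := fun z hz => (hhd z hz).deriv
  have hdera : ∀ z ∈ V, AnalyticAt ℂ hder z := by
    intro z hz; rw [hderdef]
    exact (analyticAt_const.mul (hfa1 z (hVU hz))).div ((hDa z (hVU hz)).pow 2)
      (pow_ne_zero 2 (hDne z hz))
  -- second derivative of hder
  have hd2 : ∀ z ∈ V, deriv hder z = r z * hder z := by
    intro z hz
    have hD2 : HasDerivAt (fun z => (D z)^2) (2 * (D z) ^ 1 * (c * deriv f z)) z :=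
      (hDd z (hVU hz)).pow 2
    have h1 : HasDerivAt hder (((a * d - b * c) * deriv (deriv f) z * (D z)^2
        - (a * d - b * c) * deriv f z * (2 * (D z)^1 * (c * deriv f z))) / ((D z)^2)^2) z := by
      rw [hderdef]
      exact (((hfa1 z (hVU hz)).differentiableAt.hasDerivAt).const_mul
        ((a * d - b * c))).div hD2 (pow_ne_zero 2 (hDne z hz))
    rw [h1.deriv]
    have h2 := hDne z hz
    have h3 := hf' z (hVU hz)
    simp only [hderdef, hrdef, hφdef, hpdef]
    field_simp
  -- step 2 : v = hh' - g'
  set v : ℂ → ℂ := fun z => deriv hh z - deriv g z with hvdef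
  have hva : AnalyticAt ℂ v z₀ := by
    apply AnalyticAt.congr (f := fun z => hder z - deriv g z)
      (((hdera z₀ hz₀V).sub (hga1 z₀ hz₀)))
    filter_upwards [hVev] with z hz
    simp only [hvdef, hhd_eq hz]
  have hv0 : v z₀ = 0 := by
    have h1 := hf' z₀ hz₀
    simp only [hvdef, hhd_eq hz₀V, hderdef, hdet, hD1]
    field_simp
    ring
  have hvode : ∀ᶠ z in 𝓝 z₀, deriv v z = q z * v z := by
    filter_upwards [hu_ev, hVev] with z hz0 hz
    have hev2 : v =ᶠ[𝓝 z] fun y => hder y - deriv g y := by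
      filter_upwards [hVo.mem_nhds hz] with y hy
      simp only [hvdef, hhd_eq hy]
    rw [hev2.deriv_eq, deriv_fun_sub (hdera z hz).differentiableAt
      (hga1 z (hVU hz)).differentiableAt, hd2 z hz]
    have hrq : r z = q z := by
      have : r z - q z = 0 := hz0
      exact sub_eq_zero.mp this
    have hqg : deriv (deriv g) z = q z * deriv g z := by
      simp only [hqdef]
      rw [div_mul_cancel₀ _ (hg' z (hVU hz))]
    rw [hrq, hqg]
    simp only [hvdef, hhd_eq hz]
    ring
  have hv_ev : ∀ᶠ z in 𝓝 z₀, v z = 0 :=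
    ode_loc hva (hqa z₀ hz₀).continuousAt hvode hv0
  -- step 3 : e = hh - g
  set e : ℂ → ℂ := fun z => hh z - g z with hedef
  have hea : AnalyticAt ℂ e z₀ := by
    rw [hedef, hhdef]
    exact (((analyticAt_const.mul (hfa z₀ hz₀)).add analyticAt_const).div (hDa z₀ hz₀)
      (hDne z₀ hz₀V)).sub (hga z₀ hz₀)
  have he0 : e z₀ = 0 := by
    simp only [hedef, hhdef, hbdef, hD1]
    ring
  have heode : ∀ᶠ z in 𝓝 z₀, deriv e z = (fun _ : ℂ => (0:ℂ)) z * e z := by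
    filter_upwards [hv_ev, hVev] with z hz0 hz
    have hde : deriv e z = deriv hh z - deriv g z := by
      rw [hedef]
      exact deriv_sub (hhd z hz).differentiableAt (hga z (hVU hz)).differentiableAt
    rw [hde]
    simp only [hvdef] at hz0
    rw [hz0, zero_mul]
  have he_ev : ∀ᶠ z in 𝓝 z₀, e z = 0 :=
    ode_loc hea (continuousAt_const (y := (0:ℂ))) heode he0
  -- global function E and identity theorem
  set E : ℂ → ℂ := fun z => a * f z + b - g z * D z with hEdef
  have hEa : AnalyticOnNhd ℂ E U := by
    intro z hz; rw [hEdef]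
    exact ((analyticAt_const.mul (hfa z hz)).add analyticAt_const).sub
      ((hga z hz).mul (hDa z hz))
  have hE_ev : E =ᶠ[𝓝 z₀] 0 := by
    filter_upwards [he_ev, hVev] with z hz0 hz
    have hDz := hDne z hz
    have hhg : hh z = g z := by
      simp only [hedef] at hz0
      exact sub_eq_zero.mp hz0
    simp only [hhdef] at hhg
    simp only [hEdef, Pi.zero_apply]
    field_simp at hhg
    linear_combination hhg
  have hE0 : Set.EqOn E 0 U :=
    hEa.eqOn_zero_of_preconnected_of_eventuallyEq_zero hUconn.isPreconnected hz₀ hE_ev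
  -- conclusion
  refine ⟨a, b, c, d, hdet0, fun z hz => ?_⟩
  have hEz : a * f z + b - g z * (c * f z + d) = 0 := by
    have := hE0 hz
    simp only [hEdef, hDdef, Pi.zero_apply] at this
    exact this
  have hDz : c * f z + d ≠ 0 := by
    intro h0
    have h1 : a * f z + b = 0 := by linear_combination hEz + g z * h0
    apply hdet0
    linear_combination a * h0 - c * h1
  refine ⟨hDz, ?_⟩
  rw [eq_div_iff hDz]
  linear_combination -hEz
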